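/- Under the hypotheses of the previous statement, for every λ ∈ ℝ^d, L_δ(λ) converges as δ ↑ 1 to L(λ) := −λᵀb + (1/2)·λᵀcλ + ∫ [λᵀh(x) − ln((1 + λᵀx)⁺)] F(dx), with the conventions ln(0⁺) = −∞ and the integral valued in (−∞, +∞]. -/

import Mathlib

open MeasureTheory Filter Set
open scoped RealInnerProductSpace ENNReal Topology

lemma psi_nonneg {v : ℝ} (hv : -1 < v) : 0 ≤ v - Real.log (1 + v) := by
  have h := Real.log_le_sub_one_of_pos (x := 1 + v) (by linarith)
  linarith

lemma psi_le {ε v : ℝ} (hε : 0 < ε) (h : ε ≤ 1 + v) : v - Real.log (1 + v) ≤ v ^ 2 / ε := by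
  have h0 : (0:ℝ) < 1 + v := lt_of_lt_of_le hε h
  have h1 : 1 - (1 + v)⁻¹ ≤ Real.log (1 + v) := Real.one_sub_inv_le_log_of_pos h0
  have h2 : v - Real.log (1 + v) ≤ v - (1 - (1 + v)⁻¹) := by linarith
  have h3 : v - (1 - (1 + v)⁻¹) = v ^ 2 / (1 + v) := by
    field_simp; ring
  have h4 : v ^ 2 / (1 + v) ≤ v ^ 2 / ε :=
    div_le_div_of_nonneg_left (sq_nonneg v) hε h
  linarith

lemma psi_mono {u δ δ' : ℝ} (h1 : 0 ≤ δ) (h2 : δ ≤ δ') (h3 : δ' ≤ 1) (hu : -1 < u) :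
    δ * u - Real.log (1 + δ * u) ≤ δ' * u - Real.log (1 + δ' * u) := by
  have hd1 : δ ≤ 1 := h2.trans h3
  have key0 : ∀ t : ℝ, 0 ≤ t → t ≤ 1 → (0:ℝ) < 1 + t * u := by
    intro t ht0 ht1
    rcases le_or_gt 0 u with h | h
    · nlinarith
    · nlinarith [mul_nonneg (neg_nonneg.2 h.le) (sub_nonneg.2 ht1)]
  have ha : (0:ℝ) < 1 + δ * u := key0 δ h1 hd1
  have hb : (0:ℝ) < 1 + δ' * u := key0 δ' (h1.trans h2) h3
  have key := Real.log_le_sub_one_of_pos (x := (1 + δ' * u) / (1 + δ * u)) (by positivity)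
  rw [Real.log_div (by linarith) (by linarith)] at key
  have h5 : (1 + δ' * u) / (1 + δ * u) - 1 = (δ' * u - δ * u) / (1 + δ * u) := by
    rw [div_sub_one ha.ne']; ring
  rw [h5] at key
  have h6 : (δ' * u - δ * u) / (1 + δ * u) ≤ δ' * u - δ * u := by
    rw [div_le_iff₀ ha]
    nlinarith [mul_nonneg (mul_nonneg h1 (by linarith : (0:ℝ) ≤ δ' - δ)) (sq_nonneg u)]
  linarith

lemma pt_identity {φ w : ℝ} (hφ : 0 ≤ φ) :
    ENNReal.ofReal (φ - w) + ENNReal.ofReal w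
      = ENNReal.ofReal (-(φ - w)) + ENNReal.ofReal φ + ENNReal.ofReal (-w) := by
  rcases le_total w 0 with hw | hw
  · rw [ENNReal.ofReal_of_nonpos hw, ENNReal.ofReal_of_nonpos (by linarith : -(φ - w) ≤ 0),
      add_zero, zero_add, ← ENNReal.ofReal_add hφ (by linarith : (0:ℝ) ≤ -w)]
    ring_nf
  · rcases le_total (φ - w) 0 with hg | hg
    · rw [ENNReal.ofReal_of_nonpos hg, ENNReal.ofReal_of_nonpos (by linarith : -w ≤ 0),
        zero_add, add_zero, ← ENNReal.ofReal_add (by linarith : (0:ℝ) ≤ -(φ - w)) hφ]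
      ring_nf
    · rw [ENNReal.ofReal_of_nonpos (by linarith : -(φ - w) ≤ 0),
        ENNReal.ofReal_of_nonpos (by linarith : -w ≤ 0),
        zero_add, add_zero, ← ENNReal.ofReal_add hg hw]
      ring_nf

set_option maxHeartbeats 2000000 in
lemma core {α : Type*} [MeasurableSpace α] (F : Measure α)
    (v ρ : α → ℝ) (hv : Measurable v) (hρ : Measurable ρ) (hρ0 : ∀ x, 0 ≤ ρ x)
    (M : ℝ) (hM : 0 ≤ M) (hvρ : ∀ x, |v x| ≤ M * ρ x)
    (h1 : ∫⁻ x, ENNReal.ofReal (min (ρ x ^ 2) 1) ∂F ≠ ⊤)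
    (h2 : ∫⁻ x in {x | 1 < ρ x}, ENNReal.ofReal (ρ x) ∂F ≠ ⊤)
    (h w : α → ℝ) (hh : ∀ x, h x = if ρ x ≤ 1 then v x else 0)
    (hw : ∀ x, w x = if ρ x ≤ 1 then 0 else v x)
    (f : ℝ → α → ℝ) (hf : ∀ δ x, f δ x = δ * h x - Real.log (1 - δ + δ * max (1 + v x) 0))
    (g0 : α → ℝ) (hg0 : ∀ x, g0 x = h x - Real.log (1 + v x)) :
    Tendsto (fun δ : ℝ => ((∫ x, f δ x ∂F : ℝ) : EReal)) (𝓝[Set.Ioo (0:ℝ) 1] 1)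
      (𝓝 (if F {x | 1 + v x ≤ 0} = 0 then
        ((∫⁻ x, ENNReal.ofReal (g0 x) ∂F : ℝ≥0∞) : EReal)
          - ((∫⁻ x, ENNReal.ofReal (-g0 x) ∂F : ℝ≥0∞) : EReal)
        else (⊤ : EReal))) := by
  classical
  -- measurability
  have hset1 : MeasurableSet {x : α | ρ x ≤ 1} := measurableSet_le hρ measurable_const
  have hset2 : MeasurableSet {x : α | 1 < ρ x} := measurableSet_lt measurable_const hρ
  have hmh : Measurable h := by
    have : Measurable (fun x => if ρ x ≤ 1 then v x else 0) := Measurable.ite hset1 hv measurable_const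
    simpa [funext hh] using this
  have hmw : Measurable w := by
    have : Measurable (fun x => if ρ x ≤ 1 then 0 else v x) := Measurable.ite hset1 measurable_const hv
    simpa [funext hw] using this
  have hmf : ∀ δ : ℝ, Measurable (f δ) := by
    intro δ
    have : Measurable (fun x => δ * h x - Real.log (1 - δ + δ * max (1 + v x) 0)) := by
      apply Measurable.sub
      · exact hmh.const_mul δ
      · exact Real.measurable_log.comp
          (((measurable_const.add hv).max measurable_const).const_mul δ |>.const_add (1 - δ))
    simpa [funext (hf δ)] using this
  have hmg0 : Measurable g0 := by
    have : Measurable (fun x => h x - Real.log (1 + v x)) :=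
      hmh.sub (Real.measurable_log.comp (measurable_const.add hv))
    simpa [funext hg0] using this
  have hAm : MeasurableSet {x : α | 1 + v x ≤ 0} :=
    measurableSet_le (measurable_const.add hv) measurable_const
  have habs_h : ∀ x, |h x| ≤ M := by
    intro x
    rw [hh]
    split_ifs with hx
    · exact (hvρ x).trans (by nlinarith [hρ0 x])
    · simpa using hM
  -- finiteness of F on {1 < ρ}
  have hFfin1 : F {x : α | 1 < ρ x} ≠ ⊤ := by
    have hb : F {x : α | 1 < ρ x} ≤ ∫⁻ x, ENNReal.ofReal (min (ρ x ^ 2) 1) ∂F := by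
      rw [← setLIntegral_one]
      refine le_trans (setLIntegral_mono
        (ENNReal.measurable_ofReal.comp ((hρ.pow_const 2).min measurable_const)) ?_)
        (setLIntegral_le_lintegral _ _)
      intro x hx
      have hx' : (1:ℝ) < ρ x := hx
      have hm1 : min (ρ x ^ 2) 1 = 1 := min_eq_right (by nlinarith)
      rw [Function.comp_apply, hm1]
      simp
    exact fun ht => h1 (top_le_iff.1 (ht ▸ hb))
  -- integrability of w
  have hintw : Integrable w F := by
    refine ⟨hmw.aestronglyMeasurable, ?_⟩
    rw [hasFiniteIntegral_iff_norm]
    have hpt : ∀ x, ENNReal.ofReal ‖w x‖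
        = ({x : α | 1 < ρ x}.indicator (fun x => ENNReal.ofReal |v x|)) x := by
      intro x
      by_cases hx : ρ x ≤ 1
      · rw [hw]
        simp [if_pos hx, Set.indicator_of_notMem (show x ∉ {x : α | 1 < ρ x} by
          simpa using not_lt.mpr hx)]
      · rw [hw]
        rw [Set.indicator_of_mem (show x ∈ {x : α | 1 < ρ x} from not_le.mp hx)]
        simp [if_neg hx, Real.norm_eq_abs]
    calc ∫⁻ x, ENNReal.ofReal ‖w x‖ ∂F
        = ∫⁻ x, ({x : α | 1 < ρ x}.indicator (fun x => ENNReal.ofReal |v x|)) x ∂F := by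
          exact lintegral_congr fun x => hpt x
      _ = ∫⁻ x in {x : α | 1 < ρ x}, ENNReal.ofReal |v x| ∂F :=
          lintegral_indicator hset2 _
      _ ≤ ∫⁻ x in {x : α | 1 < ρ x}, ENNReal.ofReal M * ENNReal.ofReal (ρ x) ∂F := by
          refine setLIntegral_mono ((ENNReal.measurable_ofReal.comp hρ).const_mul _) ?_
          intro x _
          rw [← ENNReal.ofReal_mul hM]
          exact ENNReal.ofReal_le_ofReal (hvρ x)
      _ = ENNReal.ofReal M * ∫⁻ x in {x : α | 1 < ρ x}, ENNReal.ofReal (ρ x) ∂F :=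
          lintegral_const_mul _ (ENNReal.measurable_ofReal.comp hρ)
      _ < ⊤ := ENNReal.mul_lt_top ENNReal.ofReal_lt_top h2.lt_top
  have hint_min : Integrable (fun x => min (ρ x ^ 2) 1) F := by
    refine ⟨((hρ.pow_const 2).min measurable_const).aestronglyMeasurable, ?_⟩
    rw [hasFiniteIntegral_iff_norm]
    have hpt : ∀ x : α, ENNReal.ofReal ‖min (ρ x ^ 2) 1‖ = ENNReal.ofReal (min (ρ x ^ 2) 1) :=
      fun x => by rw [Real.norm_eq_abs, abs_of_nonneg (le_min (sq_nonneg _) zero_le_one)]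
    simp only [hpt]
    exact h1.lt_top
  have hint_ind : Integrable ({x : α | 1 < ρ x}.indicator (fun x => 1 + ρ x)) F := by
    refine ⟨((measurable_const.add hρ).indicator hset2).aestronglyMeasurable, ?_⟩
    rw [hasFiniteIntegral_iff_norm]
    have hpt : ∀ x, ENNReal.ofReal ‖({x : α | 1 < ρ x}.indicator (fun x => 1 + ρ x)) x‖
        = ({x : α | 1 < ρ x}.indicator (fun x => 1 + ENNReal.ofReal (ρ x))) x := by
      intro x
      by_cases hx : x ∈ {x : α | 1 < ρ x}
      · rw [Set.indicator_of_mem hx, Set.indicator_of_mem hx, Real.norm_eq_abs,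
          abs_of_nonneg (by linarith [hρ0 x] : (0:ℝ) ≤ 1 + ρ x),
          ENNReal.ofReal_add zero_le_one (hρ0 x)]
        simp
      · rw [Set.indicator_of_notMem hx, Set.indicator_of_notMem hx]
        simp
    calc ∫⁻ x, ENNReal.ofReal ‖({x : α | 1 < ρ x}.indicator (fun x => 1 + ρ x)) x‖ ∂F
        = ∫⁻ x, ({x : α | 1 < ρ x}.indicator (fun x => 1 + ENNReal.ofReal (ρ x))) x ∂F :=
          lintegral_congr fun x => hpt x
      _ = ∫⁻ x in {x : α | 1 < ρ x}, (1 + ENNReal.ofReal (ρ x)) ∂F :=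
          lintegral_indicator hset2 _
      _ = ∫⁻ x in {x : α | 1 < ρ x}, (1:ℝ≥0∞) ∂F
            + ∫⁻ x in {x : α | 1 < ρ x}, ENNReal.ofReal (ρ x) ∂F :=
          lintegral_add_left measurable_const _
      _ < ⊤ := by
          rw [setLIntegral_one]
          exact ENNReal.add_lt_top.mpr ⟨hFfin1.lt_top, h2.lt_top⟩
  -- integrability of f δ
  have hint_f : ∀ δ ∈ Set.Ioo (0:ℝ) 1, Integrable (f δ) F := by
    rintro δ ⟨hδ0, hδ1⟩
    have hε : (0:ℝ) < 1 - δ := by linarith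
    obtain ⟨Lg, hLgdef⟩ : ∃ t : ℝ, t = -Real.log (1 - δ) := ⟨_, rfl⟩
    have hLg0 : 0 ≤ Lg := by
      have := Real.log_nonpos (by linarith) (by linarith : 1 - δ ≤ 1)
      rw [hLgdef]; linarith
    obtain ⟨A, hAdef⟩ : ∃ t : ℝ, t = (M + Lg) * (M ^ 2) + M ^ 2 / (1 - δ) := ⟨_, rfl⟩
    have hA0 : 0 ≤ A := by
      have t1 := mul_nonneg (add_nonneg hM hLg0) (sq_nonneg M)
      have t2 := div_nonneg (sq_nonneg M) hε.le
      rw [hAdef]; linarith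
    obtain ⟨B, hBdef⟩ : ∃ t : ℝ, t = Lg + M := ⟨_, rfl⟩
    have hB0 : 0 ≤ B := by rw [hBdef]; linarith
    have bound : ∀ x, |f δ x| ≤ A * min (ρ x ^ 2) 1
        + B * ({x : α | 1 < ρ x}.indicator (fun x => 1 + ρ x) x) := by
      intro x
      rw [hf]
      by_cases hx : ρ x ≤ 1
      · rw [Set.indicator_of_notMem (show x ∉ {x : α | 1 < ρ x} by
          simpa using not_lt.mpr hx), mul_zero, add_zero]
        have hminx : min (ρ x ^ 2) 1 = ρ x ^ 2 := min_eq_left (by nlinarith [hρ0 x])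
        rw [hminx, hh, if_pos hx]
        by_cases hv1 : 1 + v x ≤ 0
        · have hmax : max (1 + v x) 0 = 0 := max_eq_right hv1
          rw [hmax, mul_zero, add_zero]
          have hv1' : 1 ≤ |v x| := by
            rw [abs_of_nonpos (by linarith)]; linarith
          have h1x : 1 ≤ M * ρ x := hv1'.trans (hvρ x)
          have h2x : 1 ≤ M ^ 2 * ρ x ^ 2 := by nlinarith
          have habs1 : |δ * v x - Real.log (1 - δ)| ≤ M + Lg := by
            have t1 := abs_sub (δ * v x) (Real.log (1 - δ))
            have t2 : |δ * v x| = δ * |v x| := by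
              rw [abs_mul, abs_of_nonneg hδ0.le]
            have t3 : δ * |v x| ≤ M := by
              have := hvρ x
              nlinarith [abs_nonneg (v x), hρ0 x]
            have t4 : |Real.log (1 - δ)| = Lg := by
              rw [abs_of_nonpos (show Real.log (1 - δ) ≤ 0 from
                Real.log_nonpos (by linarith) (by linarith)), hLgdef]
            linarith
          have hfinal : M + Lg ≤ A * ρ x ^ 2 := by
            have : (M + Lg) * 1 ≤ (M + Lg) * (M ^ 2 * ρ x ^ 2) :=
              mul_le_mul_of_nonneg_left h2x (by linarith)
            have hd : 0 ≤ M ^ 2 / (1 - δ) * ρ x ^ 2 := by positivity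
            simp only [hAdef]; nlinarith
          linarith
        · push_neg at hv1
          have hva : -1 < v x := by linarith
          have hmax : max (1 + v x) 0 = 1 + v x := max_eq_left (by linarith)
          rw [hmax]
          have harg : 1 - δ + δ * (1 + v x) = 1 + δ * v x := by ring
          rw [harg]
          have hlb : 1 - δ ≤ 1 + δ * v x := by nlinarith
          have h0 : 0 ≤ δ * v x - Real.log (1 + δ * v x) := psi_nonneg (by nlinarith)
          have hub : δ * v x - Real.log (1 + δ * v x) ≤ (δ * v x) ^ 2 / (1 - δ) :=
            psi_le hε hlb
          rw [abs_of_nonneg h0]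
          have hsq : (δ * v x) ^ 2 ≤ M ^ 2 * ρ x ^ 2 := by
            have e1 : |v x| ^ 2 ≤ (M * ρ x) ^ 2 := by
              nlinarith [hvρ x, abs_nonneg (v x)]
            have e3 : δ ^ 2 ≤ 1 := by nlinarith
            nlinarith [sq_abs (v x), sq_nonneg (v x)]
          calc δ * v x - Real.log (1 + δ * v x)
              ≤ (δ * v x) ^ 2 / (1 - δ) := hub
            _ ≤ M ^ 2 * ρ x ^ 2 / (1 - δ) := by gcongr
            _ = M ^ 2 / (1 - δ) * ρ x ^ 2 := by ring
            _ ≤ A * ρ x ^ 2 := by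
                have t1 : 0 ≤ (M + Lg) * M ^ 2 * ρ x ^ 2 :=
                  mul_nonneg (mul_nonneg (add_nonneg hM hLg0) (sq_nonneg M)) (sq_nonneg _)
                rw [hAdef]; nlinarith
      · push_neg at hx
        rw [Set.indicator_of_mem (show x ∈ {x : α | 1 < ρ x} from hx), hh, if_neg (not_le.mpr hx)]
        rw [mul_zero, zero_sub, abs_neg]
        set r : ℝ := 1 - δ + δ * max (1 + v x) 0 with hrdef
        have hr1 : 1 - δ ≤ r := le_add_of_nonneg_right (mul_nonneg hδ0.le (le_max_right _ _))
        have hr2 : r ≤ 1 + M * ρ x := by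
          have hmx : max (1 + v x) 0 ≤ 1 + M * ρ x := by
            refine max_le ?_ (by positivity)
            nlinarith [le_abs_self (v x), hvρ x]
          nlinarith [mul_le_mul_of_nonneg_left hmx hδ0.le, mul_nonneg hM (hρ0 x)]
        have habs : |Real.log r| ≤ Lg + M * ρ x := by
          rcases le_total r 1 with hc | hc
          · rw [abs_of_nonpos (Real.log_nonpos (by linarith) hc)]
            have := Real.log_le_log hε hr1
            have hMρ : 0 ≤ M * ρ x := mul_nonneg hM (hρ0 x)
            rw [hLgdef]; linarith
          · rw [abs_of_nonneg (Real.log_nonneg hc)]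
            have := Real.log_le_sub_one_of_pos (show (0:ℝ) < r by linarith)
            linarith
        have hBineq : Lg + M * ρ x ≤ B * (1 + ρ x) := by
          rw [hBdef]; nlinarith [mul_nonneg hLg0 (hρ0 x), mul_nonneg hM (hρ0 x)]
        have hminpos : 0 ≤ A * min (ρ x ^ 2) 1 :=
          mul_nonneg hA0 (le_min (sq_nonneg _) zero_le_one)
        linarith
    refine Integrable.mono' ((hint_min.const_mul A).add (hint_ind.const_mul B))
      (hmf δ).aestronglyMeasurable ?_
    filter_upwards with x
    rw [Real.norm_eq_abs]
    exact bound x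
  -- the function m
  have hhw : ∀ x, h x + w x = v x := by
    intro x; rw [hh, hw]; split_ifs <;> ring
  obtain ⟨m, hm⟩ : ∃ m : ℝ → ℝ≥0∞,
      m = fun δ => ∫⁻ x, ENNReal.ofReal (δ * v x - Real.log (1 + δ * v x)) ∂F := ⟨_, rfl⟩
  have hmδ : ∀ δ : ℝ, m δ = ∫⁻ x, ENNReal.ofReal (δ * v x - Real.log (1 + δ * v x)) ∂F :=
    fun δ => by rw [hm]
  have hmφ_meas : ∀ δ : ℝ, Measurable fun x => ENNReal.ofReal (δ * v x - Real.log (1 + δ * v x)) :=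
    fun δ => ENNReal.measurable_ofReal.comp ((hv.const_mul δ).sub
      (Real.measurable_log.comp (measurable_const.add (hv.const_mul δ))))
  by_cases hA : F {x | 1 + v x ≤ 0} = 0
  · -- CASE 1 : no mass where 1 + v ≤ 0
    rw [if_pos hA]
    have hae : ∀ᵐ x ∂F, -1 < v x := by
      have hset : {x : α | ¬ (-1 < v x)} = {x | 1 + v x ≤ 0} := by
        ext x; simp only [Set.mem_setOf_eq, not_lt]
        constructor <;> intro <;> linarith
      rw [ae_iff, hset]; exact hA
    obtain ⟨W, hWdef⟩ : ∃ t : ℝ, t = ∫ x, w x ∂F := ⟨_, rfl⟩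
    have hfw_pt : ∀ δ ∈ Set.Ioo (0:ℝ) 1, ∀ x, -1 < v x →
        f δ x + δ * w x = δ * v x - Real.log (1 + δ * v x) := by
      rintro δ ⟨hδ0, hδ1⟩ x hx
      rw [hf]
      have hmax : max (1 + v x) 0 = 1 + v x := max_eq_left (by linarith)
      rw [hmax]
      have harg : 1 - δ + δ * (1 + v x) = 1 + δ * v x := by ring
      rw [harg]
      linear_combination δ * (hhw x)
    have hkey : ∀ δ ∈ Set.Ioo (0:ℝ) 1,
        (∫ x, f δ x ∂F = (m δ).toReal - δ * W) ∧ m δ ≠ ⊤ := by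
      rintro δ hδ
      obtain ⟨hδ0, hδ1⟩ := hδ
      have hint1 : Integrable (fun x => f δ x + δ * w x) F :=
        (hint_f δ ⟨hδ0, hδ1⟩).add (hintw.const_mul δ)
      have heq : (fun x => f δ x + δ * w x) =ᵐ[F]
          (fun x => δ * v x - Real.log (1 + δ * v x)) := by
        filter_upwards [hae] with x hx
        exact hfw_pt δ ⟨hδ0, hδ1⟩ x hx
      have hnn : 0 ≤ᵐ[F] fun x => f δ x + δ * w x := by
        filter_upwards [hae] with x hx
        rw [hfw_pt δ ⟨hδ0, hδ1⟩ x hx]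
        exact psi_nonneg (by nlinarith)
      have hlcongr : ∫⁻ x, ENNReal.ofReal (f δ x + δ * w x) ∂F = m δ := by
        rw [hmδ]
        exact lintegral_congr_ae (heq.fun_comp ENNReal.ofReal)
      have hTeq : ∫ x, (f δ x + δ * w x) ∂F = (m δ).toReal := by
        rw [integral_eq_lintegral_of_nonneg_ae hnn hint1.aestronglyMeasurable, hlcongr]
      have hm_ne : m δ ≠ ⊤ := by
        rw [← hlcongr]
        have hb := hint1.hasFiniteIntegral
        rw [hasFiniteIntegral_iff_norm] at hb
        exact (lt_of_le_of_lt (lintegral_mono fun x =>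
          ENNReal.ofReal_le_ofReal (le_abs_self _)) (by simpa [Real.norm_eq_abs] using hb)).ne
      constructor
      · have hsplit : ∫ x, f δ x ∂F
            = ∫ x, (f δ x + δ * w x) ∂F - ∫ x, δ * w x ∂F := by
          rw [← integral_sub hint1 (hintw.const_mul δ)]
          congr 1; ext x; ring
        rw [hsplit, hTeq, integral_const_mul, hWdef]
      · exact hm_ne
    have hmono : ∀ ⦃a b : ℝ⦄, 0 ≤ a → a ≤ b → b ≤ 1 → m a ≤ m b := by
      intro a b h1' h2' h3'
      rw [hmδ, hmδ]
      refine lintegral_mono_ae ?_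
      filter_upwards [hae] with x hx
      exact ENNReal.ofReal_le_ofReal (psi_mono h1' h2' h3' hx)
    -- the approximating sequence
    obtain ⟨δn, hδndef⟩ : ∃ t : ℕ → ℝ, t = fun n : ℕ => 1 - 1/((n:ℝ)+2) := ⟨_, rfl⟩
    have hδn : ∀ n : ℕ, δn n ∈ Set.Ioo (0:ℝ) 1 := by
      intro n
      have hp : (0:ℝ) < (n:ℝ) + 2 := by positivity
      have h1' : 1/((n:ℝ)+2) < 1 := by rw [div_lt_one hp]; linarith
      have h2' : 0 < 1/((n:ℝ)+2) := by positivity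
      rw [hδndef]
      exact ⟨by simpa using h1', by simpa using h2'⟩
    have hδn_mono : Monotone δn := by
      intro a b hab
      rw [hδndef]
      simp only
      have hab' : ((a:ℝ)+2) ≤ ((b:ℝ)+2) := by
        have : (a:ℝ) ≤ (b:ℝ) := Nat.cast_le.mpr hab
        linarith
      have : 1/((b:ℝ)+2) ≤ 1/((a:ℝ)+2) := one_div_le_one_div_of_le (by positivity) hab'
      linarith
    have hδn_tend : Tendsto δn atTop (𝓝 1) := by
      rw [hδndef]
      have h1' : Tendsto (fun n : ℕ => ((n:ℝ)+2)) atTop atTop :=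
        tendsto_atTop_add_const_right _ _ tendsto_natCast_atTop_atTop
      have h2' : Tendsto (fun n : ℕ => 1/((n:ℝ)+2)) atTop (𝓝 0) := by
        simp only [one_div]; exact h1'.inv_tendsto_atTop
      simpa using h2'.const_sub 1
    have hsup : (⨆ n : ℕ, m (δn n)) = m 1 := by
      have hmono_fn : ∀ᵐ x ∂F, Monotone fun n : ℕ =>
          ENNReal.ofReal (δn n * v x - Real.log (1 + δn n * v x)) := by
        filter_upwards [hae] with x hx
        intro a b hab
        exact ENNReal.ofReal_le_ofReal
          (psi_mono (hδn a).1.le (hδn_mono hab) (hδn b).2.le hx)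
      have hswap : ∫⁻ x, ⨆ n : ℕ, ENNReal.ofReal (δn n * v x - Real.log (1 + δn n * v x)) ∂F
          = ⨆ n : ℕ, m (δn n) := by
        rw [lintegral_iSup' (fun n => (hmφ_meas (δn n)).aemeasurable) hmono_fn]
        exact iSup_congr fun n => (hmδ (δn n)).symm
      rw [← hswap, hmδ]
      refine lintegral_congr_ae ?_
      filter_upwards [hae] with x hx
      have hcont : ContinuousAt (fun t : ℝ => t * v x - Real.log (1 + t * v x)) 1 := by
        have hc1 : ContinuousAt (fun t : ℝ => t * v x) 1 :=
          (continuous_id.mul continuous_const).continuousAt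
        have hc2 : ContinuousAt (fun t : ℝ => 1 + t * v x) 1 :=
          (continuous_const.add (continuous_id.mul continuous_const)).continuousAt
        have hne : (1:ℝ) + 1 * v x ≠ 0 := by simp only [one_mul]; nlinarith
        have hc3 : ContinuousAt (fun t : ℝ => Real.log (1 + t * v x)) 1 :=
          ContinuousAt.comp (x := (1:ℝ)) (g := Real.log) (f := fun t : ℝ => 1 + t * v x)
            (Real.continuousAt_log hne) hc2
        exact hc1.sub hc3
      have htend : Tendsto (fun n : ℕ =>
          ENNReal.ofReal (δn n * v x - Real.log (1 + δn n * v x))) atTop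
          (𝓝 (ENNReal.ofReal (1 * v x - Real.log (1 + 1 * v x)))) :=
        (ENNReal.continuous_ofReal.continuousAt.comp hcont).tendsto.comp hδn_tend
      have hmono_x : Monotone fun n : ℕ =>
          ENNReal.ofReal (δn n * v x - Real.log (1 + δn n * v x)) := by
        intro a b hab
        exact ENNReal.ofReal_le_ofReal
          (psi_mono (hδn a).1.le (hδn_mono hab) (hδn b).2.le hx)
      exact (tendsto_nhds_unique (tendsto_atTop_iSup hmono_x) htend)
    have hmtends : Tendsto m (𝓝[Set.Ioo (0:ℝ) 1] 1) (𝓝 (m 1)) := by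
      refine tendsto_order.2 ⟨?_, ?_⟩
      · intro a ha
        rw [← hsup] at ha
        obtain ⟨n, hn⟩ := lt_iSup_iff.mp ha
        have hev : ∀ᶠ δ in 𝓝[Set.Ioo (0:ℝ) 1] 1, δn n < δ :=
          eventually_nhdsWithin_of_eventually_nhds (eventually_gt_nhds (hδn n).2)
        filter_upwards [hev, eventually_mem_nhdsWithin] with δ h1' h2'
        exact lt_of_lt_of_le hn (hmono (hδn n).1.le h1'.le h2'.2.le)
      · intro b hb
        filter_upwards [eventually_mem_nhdsWithin] with δ hδ
        exact lt_of_le_of_lt (hmono hδ.1.le hδ.2.le le_rfl) hb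
    -- integral identities relating P, N, m 1, W
    have hIw_ne : ∫⁻ x, ENNReal.ofReal (w x) ∂F ≠ ⊤ := by
      have hb := hintw.hasFiniteIntegral
      rw [hasFiniteIntegral_iff_norm] at hb
      exact (lt_of_le_of_lt (lintegral_mono fun x =>
        ENNReal.ofReal_le_ofReal (le_abs_self _)) (by simpa [Real.norm_eq_abs] using hb)).ne
    have hIw'_ne : ∫⁻ x, ENNReal.ofReal (-w x) ∂F ≠ ⊤ := by
      have hb := hintw.hasFiniteIntegral
      rw [hasFiniteIntegral_iff_norm] at hb
      exact (lt_of_le_of_lt (lintegral_mono fun x =>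
        ENNReal.ofReal_le_ofReal (neg_le_abs _)) (by simpa [Real.norm_eq_abs] using hb)).ne
    have hg0w : ∀ x, -1 < v x → g0 x = (v x - Real.log (1 + v x)) - w x := by
      intro x hx
      rw [hg0]
      have := hhw x
      linarith [hhw x]
    have hidentity : (∫⁻ x, ENNReal.ofReal (g0 x) ∂F) + ∫⁻ x, ENNReal.ofReal (w x) ∂F
        = (∫⁻ x, ENNReal.ofReal (-g0 x) ∂F) + m 1 + ∫⁻ x, ENNReal.ofReal (-w x) ∂F := by
      calc (∫⁻ x, ENNReal.ofReal (g0 x) ∂F) + ∫⁻ x, ENNReal.ofReal (w x) ∂F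
          = ∫⁻ x, (ENNReal.ofReal (g0 x) + ENNReal.ofReal (w x)) ∂F :=
            (lintegral_add_left hmg0.ennreal_ofReal _).symm
        _ = ∫⁻ x, (ENNReal.ofReal (-g0 x) + ENNReal.ofReal (1 * v x - Real.log (1 + 1 * v x))
              + ENNReal.ofReal (-w x)) ∂F := by
            refine lintegral_congr_ae ?_
            filter_upwards [hae] with x hx
            have hφ : 0 ≤ v x - Real.log (1 + v x) := psi_nonneg hx
            have hgg : g0 x = (v x - Real.log (1 + v x)) - w x := hg0w x hx
            simp only [one_mul]
            rw [hgg]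
            exact pt_identity hφ
        _ = ∫⁻ x, (ENNReal.ofReal (-g0 x) + ENNReal.ofReal (1 * v x - Real.log (1 + 1 * v x))) ∂F
              + ∫⁻ x, ENNReal.ofReal (-w x) ∂F :=
            lintegral_add_left (hmg0.neg.ennreal_ofReal.add (hmφ_meas 1)) _
        _ = (∫⁻ x, ENNReal.ofReal (-g0 x) ∂F)
              + (∫⁻ x, ENNReal.ofReal (1 * v x - Real.log (1 + 1 * v x)) ∂F)
              + ∫⁻ x, ENNReal.ofReal (-w x) ∂F := by
            rw [lintegral_add_left (f := fun x => ENNReal.ofReal (-g0 x)) hmg0.neg.ennreal_ofReal]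
        _ = (∫⁻ x, ENNReal.ofReal (-g0 x) ∂F) + m 1 + ∫⁻ x, ENNReal.ofReal (-w x) ∂F := by
            rw [hmδ]
    have hN_ne : (∫⁻ x, ENNReal.ofReal (-g0 x) ∂F) ≠ ⊤ := by
      refine (lt_of_le_of_lt (lintegral_mono_ae ?_) hIw_ne.lt_top).ne
      filter_upwards [hae] with x hx
      refine ENNReal.ofReal_le_ofReal ?_
      have hφ : 0 ≤ v x - Real.log (1 + v x) := psi_nonneg hx
      rw [hg0w x hx]; linarith
    have hW_eq : W = (∫⁻ x, ENNReal.ofReal (w x) ∂F).toReal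
        - (∫⁻ x, ENNReal.ofReal (-w x) ∂F).toReal := by
      rw [hWdef]; exact integral_eq_lintegral_pos_part_sub_lintegral_neg_part hintw
    rcases eq_or_ne (m 1) ⊤ with hS | hS
    · -- infinite limit
      have hP : (∫⁻ x, ENNReal.ofReal (g0 x) ∂F) = ⊤ := by
        by_contra hP
        have hne : (∫⁻ x, ENNReal.ofReal (g0 x) ∂F) + ∫⁻ x, ENNReal.ofReal (w x) ∂F ≠ ⊤ :=
          ENNReal.add_ne_top.mpr ⟨hP, hIw_ne⟩
        rw [hidentity, hS] at hne
        simp at hne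
      rw [hP]
      have hlim : ((⊤:ℝ≥0∞):EReal) - ((∫⁻ x, ENNReal.ofReal (-g0 x) ∂F : ℝ≥0∞):EReal) = ⊤ := by
        rw [EReal.coe_ennreal_top,
          show ((∫⁻ x, ENNReal.ofReal (-g0 x) ∂F : ℝ≥0∞):EReal)
            = (((∫⁻ x, ENNReal.ofReal (-g0 x) ∂F).toReal : ℝ) : EReal) by
              rw [← EReal.toReal_coe_ennreal]
              exact (EReal.coe_toReal (by simpa [EReal.coe_ennreal_eq_top_iff] using hN_ne)
                (EReal.coe_ennreal_ne_bot _)).symm]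
        exact EReal.top_sub_coe _
      rw [hlim, EReal.tendsto_nhds_top_iff_real]
      intro C
      have hev1 : ∀ᶠ δ in 𝓝[Set.Ioo (0:ℝ) 1] 1, ENNReal.ofReal (C + 1 + |W|) < m δ := by
        refine hmtends.eventually ?_
        rw [hS]
        exact lt_mem_nhds ENNReal.ofReal_lt_top
      filter_upwards [hev1, eventually_mem_nhdsWithin] with δ h1' h2'
      have hmne := (hkey δ h2').2
      have hCle : C + 1 + |W| ≤ (m δ).toReal :=
        (ENNReal.ofReal_le_iff_le_toReal hmne).mp h1'.le
      have hδW : δ * W ≤ |W| := by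
        obtain ⟨hδ0, hδ1⟩ := h2'
        nlinarith [mul_le_mul_of_nonneg_left (le_abs_self W) hδ0.le, abs_nonneg W]
      rw [(hkey δ h2').1]
      exact EReal.coe_lt_coe_iff.mpr (by linarith)
    · -- finite limit
      have hP_ne : (∫⁻ x, ENNReal.ofReal (g0 x) ∂F) ≠ ⊤ := by
        intro hP
        apply hS
        have htop : (∫⁻ x, ENNReal.ofReal (-g0 x) ∂F) + m 1
            + ∫⁻ x, ENNReal.ofReal (-w x) ∂F = ⊤ := by
          rw [← hidentity, hP]
          simp
        rcases ENNReal.add_eq_top.mp htop with hc | hc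
        · rcases ENNReal.add_eq_top.mp hc with hc' | hc'
          · exact absurd hc' hN_ne
          · exact hc'
        · exact absurd hc hIw'_ne
      have htoReal : (∫⁻ x, ENNReal.ofReal (g0 x) ∂F).toReal
          - (∫⁻ x, ENNReal.ofReal (-g0 x) ∂F).toReal = (m 1).toReal - W := by
        have hcg := congrArg ENNReal.toReal hidentity
        rw [ENNReal.toReal_add (ENNReal.add_ne_top.mpr ⟨hN_ne, hS⟩) hIw'_ne,
          ENNReal.toReal_add hN_ne hS, ENNReal.toReal_add hP_ne hIw_ne] at hcg
        rw [hW_eq]; linarith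
      have hlimeq : ((∫⁻ x, ENNReal.ofReal (g0 x) ∂F : ℝ≥0∞):EReal)
          - ((∫⁻ x, ENNReal.ofReal (-g0 x) ∂F : ℝ≥0∞):EReal)
          = (((m 1).toReal - W : ℝ) : EReal) := by
        rw [show ((∫⁻ x, ENNReal.ofReal (g0 x) ∂F : ℝ≥0∞):EReal)
            = (((∫⁻ x, ENNReal.ofReal (g0 x) ∂F).toReal : ℝ) : EReal) by
              rw [← EReal.toReal_coe_ennreal]
              exact (EReal.coe_toReal (by simpa [EReal.coe_ennreal_eq_top_iff] using hP_ne)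
                (EReal.coe_ennreal_ne_bot _)).symm,
          show ((∫⁻ x, ENNReal.ofReal (-g0 x) ∂F : ℝ≥0∞):EReal)
            = (((∫⁻ x, ENNReal.ofReal (-g0 x) ∂F).toReal : ℝ) : EReal) by
              rw [← EReal.toReal_coe_ennreal]
              exact (EReal.coe_toReal (by simpa [EReal.coe_ennreal_eq_top_iff] using hN_ne)
                (EReal.coe_ennreal_ne_bot _)).symm]
        rw [← EReal.coe_sub, htoReal]
      rw [hlimeq]
      have hreal : Tendsto (fun δ : ℝ => (m δ).toReal - δ * W) (𝓝[Set.Ioo (0:ℝ) 1] 1)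
          (𝓝 ((m 1).toReal - W)) := by
        have ht1 : Tendsto (fun δ : ℝ => (m δ).toReal) (𝓝[Set.Ioo (0:ℝ) 1] 1)
            (𝓝 (m 1).toReal) := (ENNReal.tendsto_toReal hS).comp hmtends
        have ht2 : Tendsto (fun δ : ℝ => δ * W) (𝓝[Set.Ioo (0:ℝ) 1] 1) (𝓝 W) := by
          have hc : Tendsto (fun δ : ℝ => δ * W) (𝓝 1) (𝓝 (1 * W)) :=
            (continuous_id.mul continuous_const).tendsto 1
          rw [one_mul] at hc
          exact hc.mono_left nhdsWithin_le_nhds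
        exact ht1.sub ht2
      have hcoe : Tendsto (fun δ : ℝ => (((m δ).toReal - δ * W : ℝ) : EReal))
          (𝓝[Set.Ioo (0:ℝ) 1] 1) (𝓝 (((m 1).toReal - W : ℝ) : EReal)) :=
        (continuous_coe_real_ereal.tendsto _).comp hreal
      refine Filter.Tendsto.congr' ?_ hcoe
      filter_upwards [eventually_mem_nhdsWithin] with δ hδ
      rw [(hkey δ hδ).1]
  · -- CASE 2 : positive mass where 1 + v ≤ 0
    rw [if_neg hA]
    have hMpos : (0:ℝ) < M := by
      rcases lt_or_ge 0 M with hc | hc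
      · exact hc
      · exfalso
        apply hA
        have hempty : {x : α | 1 + v x ≤ 0} = (∅ : Set α) := by
          ext x
          simp only [Set.mem_setOf_eq, Set.mem_empty_iff_false, iff_false, not_le]
          have h1' : |v x| ≤ M * ρ x := hvρ x
          have h2' : M * ρ x ≤ 0 := mul_nonpos_of_nonpos_of_nonneg hc (hρ0 x)
          have : v x = 0 := abs_eq_zero.mp (le_antisymm (h1'.trans h2') (abs_nonneg _))
          linarith
        rw [hempty]
        exact measure_empty
    have hcmin : (0:ℝ) < min (1/M^2) 1 := lt_min (by positivity) one_pos
    have hAfin : F {x | 1 + v x ≤ 0} ≠ ⊤ := by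
      intro htop
      have hle : ENNReal.ofReal (min (1/M^2) 1) * F {x | 1 + v x ≤ 0}
          ≤ ∫⁻ x, ENNReal.ofReal (min (ρ x ^ 2) 1) ∂F := by
        rw [← setLIntegral_const {x : α | 1 + v x ≤ 0} (ENNReal.ofReal (min (1/M^2) 1))]
        refine le_trans (setLIntegral_mono
          (ENNReal.measurable_ofReal.comp ((hρ.pow_const 2).min measurable_const)) ?_)
          (setLIntegral_le_lintegral _ _)
        intro x hx
        have hx' : 1 + v x ≤ 0 := hx
        have h1x : 1 ≤ |v x| := by rw [abs_of_nonpos (by linarith)]; linarith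
        have h2x : 1 ≤ M * ρ x := h1x.trans (hvρ x)
        have h3x : 1/M ≤ ρ x := by
          rw [div_le_iff₀ hMpos]; nlinarith
        have h4x : 1/M^2 ≤ ρ x ^ 2 := by
          have := mul_le_mul h3x h3x (by positivity) (hρ0 x)
          calc 1/M^2 = (1/M) * (1/M) := by ring
            _ ≤ ρ x * ρ x := this
            _ = ρ x ^ 2 := by ring
        exact ENNReal.ofReal_le_ofReal (le_min (le_trans (min_le_left _ _) h4x) (min_le_right _ _))
      rw [htop, ENNReal.mul_top (by simpa [ENNReal.ofReal_eq_zero] using not_le.mpr hcmin)] at hle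
      exact h1 (top_le_iff.mp hle)
    have hAlt : (0:ℝ) < (F {x | 1 + v x ≤ 0}).toReal := ENNReal.toReal_pos hA hAfin
    have hlow : ∀ δ ∈ Set.Ioo (0:ℝ) 1,
        (F {x | 1 + v x ≤ 0}).toReal * (-M - Real.log (1 - δ)) - ∫ x, |w x| ∂F
          ≤ ∫ x, f δ x ∂F := by
      rintro δ ⟨hδ0, hδ1⟩
      have hintf := hint_f δ ⟨hδ0, hδ1⟩
      rw [← integral_add_compl hAm hintf]
      have p1 : (F {x | 1 + v x ≤ 0}).toReal * (-M - Real.log (1 - δ))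
          ≤ ∫ x in {x | 1 + v x ≤ 0}, f δ x ∂F := by
        have hconst : ∫ x in {x | 1 + v x ≤ 0}, (-M - Real.log (1 - δ)) ∂F
            = (F {x | 1 + v x ≤ 0}).toReal * (-M - Real.log (1 - δ)) := by
          rw [setIntegral_const, smul_eq_mul, measureReal_def]
        rw [← hconst]
        refine setIntegral_mono_on (integrableOn_const hAfin)
          hintf.integrableOn hAm ?_
        intro x hx
        have hx' : 1 + v x ≤ 0 := hx
        rw [hf]
        have hmax : max (1 + v x) 0 = 0 := max_eq_right hx'
        rw [hmax, mul_zero, add_zero]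
        have hah := habs_h x
        nlinarith [neg_abs_le (h x), mul_le_mul_of_nonneg_left (neg_abs_le (h x)) hδ0.le,
          mul_le_mul_of_nonneg_left hah hδ0.le]
      have p2 : -∫ x, |w x| ∂F ≤ ∫ x in {x | 1 + v x ≤ 0}ᶜ, f δ x ∂F := by
        have q1 : ∫ x in {x | 1 + v x ≤ 0}ᶜ, (-|w x|) ∂F
            ≤ ∫ x in {x | 1 + v x ≤ 0}ᶜ, f δ x ∂F := by
          refine setIntegral_mono_on (hintw.abs.neg).integrableOn
            hintf.integrableOn hAm.compl ?_
          intro x hx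
          have hx' : -1 < v x := by
            simp only [Set.mem_compl_iff, Set.mem_setOf_eq, not_le] at hx
            linarith
          rw [hf]
          have hmax : max (1 + v x) 0 = 1 + v x := max_eq_left (by linarith)
          rw [hmax]
          have harg : 1 - δ + δ * (1 + v x) = 1 + δ * v x := by ring
          rw [harg]
          have hpsi : 0 ≤ δ * v x - Real.log (1 + δ * v x) := psi_nonneg (by nlinarith)
          have hhx := hhw x
          nlinarith [mul_le_mul_of_nonneg_left (le_abs_self (w x)) hδ0.le, abs_nonneg (w x)]
        have q2 : ∫ x in {x | 1 + v x ≤ 0}ᶜ, (-|w x|) ∂F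
            = -∫ x in {x | 1 + v x ≤ 0}ᶜ, |w x| ∂F := by
          rw [integral_neg]
        have q3 : ∫ x in {x | 1 + v x ≤ 0}ᶜ, |w x| ∂F ≤ ∫ x, |w x| ∂F :=
          setIntegral_le_integral hintw.abs (Filter.Eventually.of_forall fun x => abs_nonneg _)
        linarith
      linarith
    rw [EReal.tendsto_nhds_top_iff_real]
    intro C
    have hlog : Tendsto (fun δ : ℝ => -Real.log (1 - δ)) (𝓝[Set.Ioo (0:ℝ) 1] 1) atTop := by
      have h1' : Tendsto (fun δ : ℝ => 1 - δ) (𝓝[Set.Ioo (0:ℝ) 1] 1) (𝓝[Set.Ioi (0:ℝ)] 0) := by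
        apply tendsto_nhdsWithin_of_tendsto_nhds_of_eventually_within
        · have hc : Tendsto (fun δ : ℝ => 1 - δ) (𝓝 1) (𝓝 ((1:ℝ) - 1)) :=
            ((continuous_const (y := (1:ℝ))).sub continuous_id).tendsto 1
          rw [sub_self] at hc
          exact hc.mono_left nhdsWithin_le_nhds
        · filter_upwards [eventually_mem_nhdsWithin] with δ hδ
          exact Set.mem_Ioi.mpr (by linarith [hδ.2] : (0:ℝ) < 1 - δ)
      have h2' : Tendsto (fun δ : ℝ => Real.log (1 - δ)) (𝓝[Set.Ioo (0:ℝ) 1] 1) atBot :=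
        Real.tendsto_log_nhdsGT_zero.comp h1'
      exact tendsto_neg_atBot_atTop.comp h2'
    have hgrow : Tendsto (fun δ : ℝ =>
        (F {x | 1 + v x ≤ 0}).toReal * (-M - Real.log (1 - δ)) - ∫ x, |w x| ∂F)
        (𝓝[Set.Ioo (0:ℝ) 1] 1) atTop := by
      have hg1 : Tendsto (fun δ : ℝ =>
          (F {x | 1 + v x ≤ 0}).toReal * (-Real.log (1 - δ))) (𝓝[Set.Ioo (0:ℝ) 1] 1) atTop :=
        hlog.const_mul_atTop hAlt
      have hg2 := tendsto_atTop_add_const_right (𝓝[Set.Ioo (0:ℝ) 1] 1)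
        ((F {x | 1 + v x ≤ 0}).toReal * (-M) - ∫ x, |w x| ∂F) hg1
      refine hg2.congr ?_
      intro δ
      ring
    filter_upwards [hgrow.eventually_ge_atTop (C + 1), eventually_mem_nhdsWithin] with δ h1' h2'
    have := hlow δ h2'
    exact EReal.coe_lt_coe_iff.mpr (by linarith)


theorem stmt_10 (d : ℕ)
    (b : EuclideanSpace ℝ (Fin d))
    (c : EuclideanSpace ℝ (Fin d) →L[ℝ] EuclideanSpace ℝ (Fin d))
    (hcsym : ∀ x y, ⟪c x, y⟫ = ⟪x, c y⟫) (hcpos : ∀ x, 0 ≤ ⟪x, c x⟫)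
    (F : Measure (EuclideanSpace ℝ (Fin d))) [SigmaFinite F]
    (hF0 : F {0} = 0)
    (hF1 : ∫⁻ x, ENNReal.ofReal (min (‖x‖ ^ 2) 1) ∂F < ⊤)
    (hF2 : ∫⁻ x in {x | 1 < ‖x‖}, ENNReal.ofReal ‖x‖ ∂F < ⊤)
    -- the δ-regularized functional, δ ∈ (0,1)
    (Lδ : ℝ → EuclideanSpace ℝ (Fin d) → ℝ)
    (hLδ : ∀ δ ∈ Set.Ioo (0:ℝ) 1, ∀ lam, Lδ δ lam =
      -⟪lam, b⟫ + (1/2) * ⟪lam, c lam⟫ +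
        ∫ x, (δ * (if ‖x‖ ≤ 1 then ⟪lam, x⟫ else 0)
          - Real.log (1 - δ + δ * max (1 + ⟪lam, x⟫) 0)) ∂F)
    -- the limit functional L, with values in (−∞, +∞] and the convention ln(0⁺) = −∞
    (g : EuclideanSpace ℝ (Fin d) → EuclideanSpace ℝ (Fin d) → ℝ)
    (hg : ∀ lam x, g lam x =
      (if ‖x‖ ≤ 1 then ⟪lam, x⟫ else 0) - Real.log (1 + ⟪lam, x⟫))
    (L : EuclideanSpace ℝ (Fin d) → EReal)
    (hL : ∀ lam, L lam =
      if F {x | 1 + ⟪lam, x⟫ ≤ 0} = 0 then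
        ((-⟪lam, b⟫ + (1/2) * ⟪lam, c lam⟫ : ℝ) : EReal)
          + ((∫⁻ x, ENNReal.ofReal (g lam x) ∂F : ℝ≥0∞) : EReal)
          - ((∫⁻ x, ENNReal.ofReal (-(g lam x)) ∂F : ℝ≥0∞) : EReal)
      else (⊤ : EReal)) :
    ∀ lam, Tendsto (fun δ : ℝ => ((Lδ δ lam : ℝ) : EReal))
      (𝓝[Set.Ioo (0:ℝ) 1] 1) (𝓝 (L lam)) := by
  intro lam
  have hvmeas : Measurable fun x : EuclideanSpace ℝ (Fin d) => (⟪lam, x⟫ : ℝ) :=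
    (continuous_const.inner continuous_id).measurable
  have hcore := core F (fun x => ⟪lam, x⟫) (fun x => ‖x‖) hvmeas measurable_norm
    (fun x => norm_nonneg x) ‖lam‖ (norm_nonneg lam)
    (fun x => by simpa using abs_real_inner_le_norm lam x)
    hF1.ne hF2.ne
    (fun x => if ‖x‖ ≤ 1 then ⟪lam, x⟫ else 0)
    (fun x => if ‖x‖ ≤ 1 then 0 else ⟪lam, x⟫)
    (fun _ => rfl) (fun _ => rfl)
    (fun δ x => δ * (if ‖x‖ ≤ 1 then ⟪lam, x⟫ else 0)
      - Real.log (1 - δ + δ * max (1 + ⟪lam, x⟫) 0))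
    (fun _ _ => rfl)
    (g lam) (hg lam)
  obtain ⟨K, hK⟩ : ∃ t : ℝ, t = -⟪lam, b⟫ + (1/2) * ⟪lam, c lam⟫ := ⟨_, rfl⟩
  have haddcont : ContinuousAt (fun p : EReal × EReal => p.1 + p.2)
      (((K:ℝ):EReal), if F {x | 1 + ⟪lam, x⟫ ≤ 0} = 0 then
        ((∫⁻ x, ENNReal.ofReal (g lam x) ∂F : ℝ≥0∞) : EReal)
          - ((∫⁻ x, ENNReal.ofReal (-(g lam x)) ∂F : ℝ≥0∞) : EReal)
        else (⊤ : EReal)) :=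
    EReal.continuousAt_add (Or.inl (EReal.coe_ne_top K)) (Or.inl (EReal.coe_ne_bot K))
  have h3 := haddcont.tendsto.comp (tendsto_const_nhds.prodMk_nhds hcore)
  have h1 : L lam = ((K:ℝ):EReal) + (if F {x | 1 + ⟪lam, x⟫ ≤ 0} = 0 then
      ((∫⁻ x, ENNReal.ofReal (g lam x) ∂F : ℝ≥0∞) : EReal)
        - ((∫⁻ x, ENNReal.ofReal (-(g lam x)) ∂F : ℝ≥0∞) : EReal)
      else (⊤ : EReal)) := by
    rw [hL lam, hK]
    split_ifs with hAc
    · rw [sub_eq_add_neg, sub_eq_add_neg, add_assoc]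
    · exact (EReal.coe_add_top _).symm
  rw [h1]
  refine Filter.Tendsto.congr' ?_ h3
  filter_upwards [eventually_mem_nhdsWithin] with δ hδ
  have hB := hLδ δ hδ lam
  simp only [Function.comp]
  rw [hB, ← hK, EReal.coe_add]
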